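/- Let n ≥ 2, a ≥ 2√(n-1), β_k as above. Then for consecutive terms, the subsequence of even-indexed terms (β_{2k}) is monotonically non-increasing and the subsequence of odd-indexed terms (β_{2k+1}) is monotonically non-decreasing, with β_{2k+1} ≤ β_{2j} for all j, k. -/

import Mathlib

set_option maxHeartbeats 1000000

private lemma stmt7_aux_b2W (a m b1 : ℝ) (hm0 : 0 < m) (ha0 : 0 < a)
    (hA : 4 * m ≤ a ^ 2) (hAm0 : 0 < a ^ 2 - m)
    (hb1_def : b1 = 2 * m / (a * (a ^ 2 - m))) :
    2 * m * ((1 + m * b1 ^ 2) / (a - m * b1) - b1) * (a ^ 2 - m)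
      ≤ a * (a ^ 2 - 3 * m) := by
  have hA2m : 0 < a ^ 2 - 2 * m := by nlinarith
  have hApm : 0 < a ^ 2 + m := by positivity
  have hden_b1 : a - m * b1 = (a ^ 2 - 2 * m) * (a ^ 2 + m) / (a * (a ^ 2 - m)) := by
    rw [hb1_def]; field_simp; ring
  rw [← sub_nonneg]
  have e : a * (a ^ 2 - 3 * m) - 2 * m * ((1 + m * b1 ^ 2) / (a - m * b1) - b1) * (a ^ 2 - m)
      = (a ^ 2 - 4 * m) * ((a ^ 2) ^ 2 - 3 * a ^ 2 * m + 4 * m ^ 2)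
        / (a * (a ^ 2 - 2 * m)) := by
    have hA2m' : a ^ 2 - m * 2 ≠ 0 := (by linarith : (0:ℝ) < a ^ 2 - m * 2).ne'
    rw [hden_b1, hb1_def]
    field_simp
    ring
  rw [e]
  apply div_nonneg _ (by positivity)
  apply mul_nonneg (by linarith)
  nlinarith [mul_nonneg (by nlinarith : (0:ℝ) ≤ a ^ 2) (by nlinarith : (0:ℝ) ≤ a ^ 2 - 3 * m),
    sq_nonneg m]

theorem stmt_7 (n : ℕ) (hn : 2 ≤ n) (a : ℝ)
    (ha : 2 * Real.sqrt ((n : ℝ) - 1) ≤ a)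
    (β : ℕ → ℝ) (h0 : β 0 = 1 / a)
    (hrec : ∀ k : ℕ, β (k + 1) =
      (1 + ((n : ℝ) - 1) * (β k) ^ 2) / (a - ((n : ℝ) - 1) * β k) - β k) :
    (∀ k : ℕ, β (2 * (k + 1)) ≤ β (2 * k)) ∧
    (∀ k : ℕ, β (2 * k + 1) ≤ β (2 * (k + 1) + 1)) ∧
    (∀ j k : ℕ, β (2 * k + 1) ≤ β (2 * j)) := by
  set m : ℝ := (n : ℝ) - 1 with hm_def
  clear_value m
  have hm1 : 1 ≤ m := by
    have : (2 : ℝ) ≤ (n : ℝ) := by exact_mod_cast hn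
    rw [hm_def]; linarith
  have hm0 : 0 < m := by linarith
  have ha0 : 0 < a := by
    have h1 : 0 < Real.sqrt m := Real.sqrt_pos.mpr hm0
    linarith
  have hA : 4 * m ≤ a ^ 2 := by
    have h2 : Real.sqrt m ^ 2 = m := Real.sq_sqrt hm0.le
    nlinarith [Real.sqrt_nonneg m]
  set s : ℝ := Real.sqrt (a ^ 2 - 3 * m) with hs_def
  have hs0 : 0 ≤ s := by rw [hs_def]; exact Real.sqrt_nonneg _
  have hs2 : s ^ 2 = a ^ 2 - 3 * m := by
    rw [hs_def]; exact Real.sq_sqrt (by linarith)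
  have hs_half : a / 2 ≤ s := by
    have h1 : (a / 2) ^ 2 ≤ a ^ 2 - 3 * m := by nlinarith
    calc a / 2 = Real.sqrt ((a / 2) ^ 2) := (Real.sqrt_sq (by linarith)).symm
      _ ≤ s := by rw [hs_def]; exact Real.sqrt_le_sqrt h1
  clear_value s
  set r : ℝ := 1 / (a + s) with hr_def
  clear_value r
  have har : 0 < a + s := by linarith
  have hr0 : 0 < r := by rw [hr_def]; positivity
  have hr23 : r ≤ 2 / (3 * a) := by
    rw [hr_def, div_le_div_iff₀ har (by linarith)]
    linarith
  have hra : r ≤ 1 / a := by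
    have : 2 / (3 * a) ≤ 1 / a := by
      rw [div_le_div_iff₀ (by linarith) ha0]; linarith
    linarith
  have hfix : 2 * a * r - 3 * m * r ^ 2 = 1 := by
    rw [hr_def]
    field_simp
    linear_combination (-1) * hs2
  have hra2 : r * a ≤ 2 / 3 := by
    have h1 : r * a ≤ 2 / (3 * a) * a := by nlinarith
    have h2 : 2 / (3 * a) * a = 2 / 3 := by field_simp
    linarith
  have hden0 : ∀ x : ℝ, x ≤ 1 / a → 0 < a - m * x := by
    intro x hx
    have hax : x * a ≤ 1 := by
      have h1 := mul_le_mul_of_nonneg_right hx ha0.le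
      have h2 : 1 / a * a = 1 := by field_simp
      linarith
    nlinarith [hax, mul_pos hm0 ha0]
  -- key comparison lemma
  have key : ∀ x y : ℝ, 0 < x → x ≤ 1 / a → 0 < y → y ≤ 1 / a → x ≤ y →
      m - a ^ 2 + 2 * a * m * (x + y) - 2 * m ^ 2 * (x * y) ≤ 0 →
      (1 + m * y ^ 2) / (a - m * y) - y ≤ (1 + m * x ^ 2) / (a - m * x) - x := by
    intro x y hx0 hx1 hy0 hy1 hxy hD
    have dx := hden0 x hx1
    have dy := hden0 y hy1
    have id1 : ((1 + m * x ^ 2) / (a - m * x) - x) - ((1 + m * y ^ 2) / (a - m * y) - y)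
        = (y - x) * (-(m - a ^ 2 + 2 * a * m * (x + y) - 2 * m ^ 2 * (x * y)))
          / ((a - m * x) * (a - m * y)) := by
      field_simp
      ring
    have h2 : 0 ≤ (y - x) * (-(m - a ^ 2 + 2 * a * m * (x + y) - 2 * m ^ 2 * (x * y)))
          / ((a - m * x) * (a - m * y)) :=
      div_nonneg (mul_nonneg (by linarith) (by linarith)) (by positivity)
    linarith [id1, h2]
  -- positivity and upper bound 1/a
  have hfpos : ∀ x : ℝ, 0 < x → x ≤ 1 / a → 0 < (1 + m * x ^ 2) / (a - m * x) - x := by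
    intro x hx0 hx1
    have dx := hden0 x hx1
    have hax : a * x ≤ 1 := by
      calc a * x ≤ a * (1 / a) := mul_le_mul_of_nonneg_left hx1 ha0.le
        _ = 1 := by field_simp
    have id1 : (1 + m * x ^ 2) / (a - m * x) - x = (1 - a * x + 2 * m * x ^ 2) / (a - m * x) := by
      field_simp; ring
    rw [id1]
    apply div_pos _ dx
    nlinarith [sq_nonneg x]
  have hfle1a : ∀ x : ℝ, 0 < x → x ≤ 1 / a → (1 + m * x ^ 2) / (a - m * x) - x ≤ 1 / a := by
    intro x hx0 hx1
    have dx := hden0 x hx1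
    have hax : a * x ≤ 1 := by
      calc a * x ≤ a * (1 / a) := mul_le_mul_of_nonneg_left hx1 ha0.le
        _ = 1 := by field_simp
    have id1 : (1 + m * x ^ 2) / (a - m * x) - x - 1 / a
        = x * (2 * a * m * x - (a ^ 2 - m)) / (a * (a - m * x)) := by
      field_simp; ring
    have h1 : 2 * a * m * x ≤ 2 * m := by nlinarith
    have h2 : x * (2 * a * m * x - (a ^ 2 - m)) ≤ 0 :=
      mul_nonpos_of_nonneg_of_nonpos hx0.le (by linarith)
    have h3 : x * (2 * a * m * x - (a ^ 2 - m)) / (a * (a - m * x)) ≤ 0 :=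
      div_nonpos_of_nonpos_of_nonneg h2 (by positivity)
    linarith [id1, h3]
  -- f x vs r
  have hfr_id : ∀ x : ℝ, x ≤ 1 / a → (1 + m * x ^ 2) / (a - m * x) - x - r
      = ((x - r) * (2 * m * x + 3 * m * r - a)) / (a - m * x) := by
    intro x hx1
    have dx := hden0 x hx1
    have e : (1 + m * x ^ 2) / (a - m * x) - x - r
        = ((x - r) * (2 * m * x + 3 * m * r - a) + (3 * m * r ^ 2 - 2 * a * r + 1))
          / (a - m * x) := by
      field_simp; ring
    rw [e, show 3 * m * r ^ 2 - 2 * a * r + 1 = 0 by linarith [hfix], add_zero]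
  have hfler : ∀ x : ℝ, r ≤ x → x ≤ 1 / a → (1 + m * x ^ 2) / (a - m * x) - x ≤ r := by
    intro x hxr hx1
    have dx := hden0 x hx1
    have hid := hfr_id x hx1
    have hax : a * x ≤ 1 := by
      calc a * x ≤ a * (1 / a) := mul_le_mul_of_nonneg_left hx1 ha0.le
        _ = 1 := by field_simp
    have h1 : 2 * m * x + 3 * m * r - a ≤ 0 := by
      nlinarith [mul_le_mul_of_nonneg_left hax hm0.le,
        mul_le_mul_of_nonneg_left hra2 hm0.le, hA, ha0]
    have h3 : ((x - r) * (2 * m * x + 3 * m * r - a)) / (a - m * x) ≤ 0 :=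
      div_nonpos_of_nonpos_of_nonneg
        (mul_nonpos_of_nonneg_of_nonpos (by linarith) h1) dx.le
    linarith [hid, h3]
  have hfger : ∀ x : ℝ, 0 < x → x ≤ r → r ≤ (1 + m * x ^ 2) / (a - m * x) - x := by
    intro x hx0 hxr
    have hx1 : x ≤ 1 / a := le_trans hxr hra
    have dx := hden0 x hx1
    have hid := hfr_id x hx1
    have hxa : x * a ≤ 2 / 3 := by
      nlinarith [mul_le_mul_of_nonneg_right hxr ha0.le, hra2]
    have h1 : 2 * m * x + 3 * m * r - a ≤ 0 := by
      nlinarith [mul_le_mul_of_nonneg_left hxa hm0.le,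
        mul_le_mul_of_nonneg_left hra2 hm0.le, hA, ha0]
    have hp : 0 ≤ (x - r) * (2 * m * x + 3 * m * r - a) := by
      nlinarith [mul_nonneg (by linarith : (0:ℝ) ≤ r - x)
        (by linarith : (0:ℝ) ≤ a - (2 * m * x + 3 * m * r))]
    have h3 : 0 ≤ ((x - r) * (2 * m * x + 3 * m * r - a)) / (a - m * x) :=
      div_nonneg hp dx.le
    linarith [hid, h3]
  -- explicit first odd term
  set b1 : ℝ := 2 * m / (a * (a ^ 2 - m)) with hb1_def
  clear_value b1
  have hAm0 : 0 < a ^ 2 - m := by nlinarith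
  have hb1pos : 0 < b1 := by rw [hb1_def]; positivity
  have hb1r : b1 ≤ r := by
    have has2m : 0 ≤ a * s - 2 * m := by
      nlinarith [mul_le_mul_of_nonneg_left hs_half ha0.le, hA]
    rw [hb1_def, hr_def, div_le_div_iff₀ (by positivity) har]
    nlinarith [hs2, mul_nonneg hs0 has2m]
  have hb11a : b1 ≤ 1 / a := le_trans hb1r hra
  have hβ1 : β 1 = b1 := by
    rw [hrec 0, h0, hb1_def]
    have e1 : a - m * (1 / a) = (a ^ 2 - m) / a := by field_simp
    rw [e1, div_div_eq_mul_div]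
    field_simp
    ring
  -- D-lemma for odd pairs
  have hDodd : ∀ x y : ℝ, 0 < x → x ≤ r → 0 < y → y ≤ r →
      m - a ^ 2 + 2 * a * m * (x + y) - 2 * m ^ 2 * (x * y) ≤ 0 := by
    intro x y hx0 hxr hy0 hyr
    have hxa : x * a ≤ 2 / 3 := by
      nlinarith [mul_le_mul_of_nonneg_right hxr ha0.le, hra2]
    have hya : y * a ≤ 2 / 3 := by
      nlinarith [mul_le_mul_of_nonneg_right hyr ha0.le, hra2]
    nlinarith [mul_le_mul_of_nonneg_left hxa hm0.le,
      mul_le_mul_of_nonneg_left hya hm0.le,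
      mul_pos (mul_pos hm0 hm0) (mul_pos hx0 hy0), hA, hm0]
  -- D-lemma for (small, ≤ 1/a) pairs
  have hDW : ∀ x y : ℝ, 0 ≤ x → 2 * m * x * (a ^ 2 - m) ≤ a * (a ^ 2 - 3 * m) →
      0 ≤ y → y ≤ 1 / a →
      m - a ^ 2 + 2 * a * m * (x + y) - 2 * m ^ 2 * (x * y) ≤ 0 := by
    intro x y hx0 hxw hy0 hy1
    have hay : a * y ≤ 1 := by
      calc a * y ≤ a * (1 / a) := mul_le_mul_of_nonneg_left hy1 ha0.le
        _ = 1 := by field_simp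
    have hax : m * x ≤ a / 2 := by nlinarith
    have hprod : 0 ≤ 2 * m * (a - m * x) * (1 - a * y) :=
      mul_nonneg (mul_nonneg (by linarith) (by linarith)) (by linarith)
    nlinarith [hprod, hxw, ha0]
  -- the crucial bound : f b1 ≤ w  (in cleared form)
  have hb2W : 2 * m * ((1 + m * b1 ^ 2) / (a - m * b1) - b1) * (a ^ 2 - m)
      ≤ a * (a ^ 2 - 3 * m) :=
    stmt7_aux_b2W a m b1 hm0 ha0 hA hAm0 hb1_def

  -- basic invariants
  have hpos : ∀ k : ℕ, 0 < β k ∧ β k ≤ 1 / a := by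
    intro k
    induction k with
    | zero => rw [h0]; exact ⟨by positivity, le_rfl⟩
    | succ k ih =>
      rw [hrec k]
      exact ⟨hfpos _ ih.1 ih.2, hfle1a _ ih.1 ih.2⟩
  have heven_r : ∀ k : ℕ, r ≤ β (2 * k) := by
    intro k
    induction k with
    | zero => rw [show 2 * 0 = 0 by norm_num, h0]; exact hra
    | succ k ih =>
      have hodd : β (2 * k + 1) ≤ r := by
        rw [hrec (2 * k)]
        exact hfler _ ih (hpos (2 * k)).2
      rw [show 2 * (k + 1) = 2 * k + 1 + 1 by ring, hrec (2 * k + 1)]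
      exact hfger _ (hpos (2 * k + 1)).1 hodd
  have hodd_r : ∀ k : ℕ, β (2 * k + 1) ≤ r := by
    intro k
    rw [hrec (2 * k)]
    exact hfler _ (heven_r k) (hpos (2 * k)).2
  -- main induction
  have main : ∀ k : ℕ, b1 ≤ β (2 * k + 1) ∧ β (2 * k + 1 + 1) ≤ β (2 * k) ∧
      β (2 * k + 1) ≤ β (2 * k + 1 + 1 + 1) := by
    intro k
    induction k with
    | zero =>
      have hb1 : b1 ≤ β (2 * 0 + 1) := by
        rw [show 2 * 0 + 1 = 1 by norm_num, hβ1]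
      have hE0 : β (2 * 0 + 1 + 1) ≤ β (2 * 0) := by
        rw [show 2 * 0 + 1 + 1 = 2 by norm_num, show 2 * 0 = 0 by norm_num, h0]
        exact (hpos 2).2
      refine ⟨hb1, hE0, ?_⟩
      -- β 1 ≤ β 3
      have hβ2 : β 2 = (1 + m * b1 ^ 2) / (a - m * b1) - b1 := by
        rw [show 2 = 1 + 1 by norm_num, hrec 1, hβ1]
      have hβ2W : 2 * m * β 2 * (a ^ 2 - m) ≤ a * (a ^ 2 - 3 * m) := by
        rw [hβ2]; exact hb2W
      have h2 : β 2 ≤ β 0 := by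
        have := hE0
        norm_num at this
        exact this
      have hD := hDW (β 2) (β 0) (hpos 2).1.le hβ2W (hpos 0).1.le (hpos 0).2
      have hk := key (β 2) (β 0) (hpos 2).1 (hpos 2).2 (hpos 0).1 (hpos 0).2 h2 hD
      rw [← hrec 2, ← hrec 0] at hk
      simpa using hk
    | succ k ih =>
      obtain ⟨ih1, ih2, ih3⟩ := ih
      have new1 : b1 ≤ β (2 * (k + 1) + 1) := by
        rw [show 2 * (k + 1) + 1 = 2 * k + 1 + 1 + 1 by ring]
        exact le_trans ih1 ih3
      have new2 : β (2 * (k + 1) + 1 + 1) ≤ β (2 * (k + 1)) := by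
        have o1 := hodd_r k
        have o2 : β (2 * k + 1 + 1 + 1) ≤ r := by
          have h := hodd_r (k + 1)
          rw [show 2 * (k + 1) + 1 = 2 * k + 1 + 1 + 1 by ring] at h
          exact h
        have hD := hDodd (β (2 * k + 1)) (β (2 * k + 1 + 1 + 1))
          (hpos _).1 o1 (hpos _).1 o2
        have hk2 := key _ _ (hpos (2 * k + 1)).1 (hpos _).2
          (hpos (2 * k + 1 + 1 + 1)).1 (hpos _).2 ih3 hD
        rw [← hrec (2 * k + 1), ← hrec (2 * k + 1 + 1 + 1)] at hk2
        rw [show 2 * (k + 1) + 1 + 1 = 2 * k + 1 + 1 + 1 + 1 by ring,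
          show 2 * (k + 1) = 2 * k + 1 + 1 by ring]
        exact hk2
      have new3 : β (2 * (k + 1) + 1) ≤ β (2 * (k + 1) + 1 + 1 + 1) := by
        have hx0 := (hpos (2 * (k + 1) + 1 + 1)).1
        have hle : β (2 * (k + 1) + 1 + 1) ≤ (1 + m * b1 ^ 2) / (a - m * b1) - b1 := by
          have hx : β (2 * (k + 1) + 1) ≤ r := hodd_r (k + 1)
          have hD := hDodd b1 (β (2 * (k + 1) + 1)) hb1pos hb1r (hpos _).1 hx
          have hk3 := key b1 _ hb1pos hb11a (hpos _).1 (hpos _).2 new1 hD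
          rw [← hrec (2 * (k + 1) + 1)] at hk3
          exact hk3
        have hW : 2 * m * β (2 * (k + 1) + 1 + 1) * (a ^ 2 - m)
            ≤ a * (a ^ 2 - 3 * m) := by
          have step1 : 2 * m * β (2 * (k + 1) + 1 + 1)
              ≤ 2 * m * ((1 + m * b1 ^ 2) / (a - m * b1) - b1) :=
            mul_le_mul_of_nonneg_left hle (by positivity)
          have step2 := mul_le_mul_of_nonneg_right step1 hAm0.le
          linarith [hb2W, step2]
        have hD := hDW _ _ hx0.le hW (hpos (2 * (k + 1))).1.le (hpos _).2
        have hk4 := key _ _ hx0 (hpos _).2 (hpos (2 * (k + 1))).1 (hpos _).2 new2 hD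
        rw [← hrec (2 * (k + 1) + 1 + 1), ← hrec (2 * (k + 1))] at hk4
        exact hk4
      exact ⟨new1, new2, new3⟩
  refine ⟨?_, ?_, ?_⟩
  · intro k
    have h := (main k).2.1
    rw [show 2 * (k + 1) = 2 * k + 1 + 1 by ring]
    exact h
  · intro k
    have h := (main k).2.2
    rw [show 2 * (k + 1) + 1 = 2 * k + 1 + 1 + 1 by ring]
    exact h
  · intro j k
    exact le_trans (hodd_r k) (heven_r j)
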